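/- Let n units have potential treatment indicators W_i(0), W_i(1) ∈ {0,1} and potential outcomes Y_i(0), Y_i(1) ∈ ℝ. Assume (monotonicity) W_i(1) ≥ W_i(0) for all i, (existence of a complier) W_j(1) > W_j(0) for some j, and (exclusion restriction) Y_i(1) = Y_i(0) whenever W_i(1) = W_i(0). Then, letting n_co = #{i : W_i(1) - W_i(0) = 1}, τ_W = (1/n)∑_i (W_i(1)-W_i(0)) and τ_Y = (1/n)∑_i (Y_i(1)-Y_i(0)), the complier average causal effect τ_CACE = (1/n_co) ∑_{i : W_i(1)-W_i(0)=1} (Y_i(1)-Y_i(0)) satisfies τ_CACE = τ_Y / τ_W. -/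

import Mathlib

open Finset

/-- the sample CACE equals τ_Y / τ_W. -/
theorem sample_CACE_eq_ratio (n : ℕ) (hn : 0 < n)
    (W0 W1 Y0 Y1 : Fin n → ℝ)
    (hW0 : ∀ i, W0 i = 0 ∨ W0 i = 1) (hW1 : ∀ i, W1 i = 0 ∨ W1 i = 1)
    (hmono : ∀ i, W0 i ≤ W1 i)
    (hco : ∃ j, W0 j < W1 j)
    (hexcl : ∀ i, W1 i = W0 i → Y1 i = Y0 i) :
    (∑ i ∈ Finset.univ.filter (fun i => W1 i - W0 i = 1), (Y1 i - Y0 i)) /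
      ((Finset.univ.filter (fun i => W1 i - W0 i = 1)).card : ℝ)
      = ((∑ i, (Y1 i - Y0 i)) / (n : ℝ)) / ((∑ i, (W1 i - W0 i)) / (n : ℝ)) := by
  set S := Finset.univ.filter (fun i => W1 i - W0 i = 1) with hS
  have hdichot : ∀ i, W1 i - W0 i = 1 ∨ W1 i = W0 i := by
    intro i
    rcases hW0 i with h0 | h0 <;> rcases hW1 i with h1 | h1
    · right; rw [h0, h1]
    · left; rw [h0, h1]; ring
    · exfalso; linarith [hmono i]
    · right; rw [h0, h1]
  have hY : ∑ i, (Y1 i - Y0 i) = ∑ i ∈ S, (Y1 i - Y0 i) := by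
    rw [← Finset.sum_filter_add_sum_filter_not Finset.univ
      (fun i => W1 i - W0 i = 1) (fun i => Y1 i - Y0 i)]
    have : ∑ i ∈ Finset.univ.filter (fun i => ¬ (W1 i - W0 i = 1)),
        (Y1 i - Y0 i) = 0 := by
      apply Finset.sum_eq_zero
      intro i hi
      simp only [Finset.mem_filter] at hi
      rcases hdichot i with h | h
      · exact absurd h hi.2
      · rw [hexcl i h]; ring
    rw [this, add_zero]
  have hW : ∑ i, (W1 i - W0 i) = (S.card : ℝ) := by
    rw [← Finset.sum_filter_add_sum_filter_not Finset.univ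
      (fun i => W1 i - W0 i = 1) (fun i => W1 i - W0 i)]
    have h1 : ∑ i ∈ S, (W1 i - W0 i) = (S.card : ℝ) := by
      rw [Finset.sum_congr rfl (fun i hi => (Finset.mem_filter.mp hi).2)]
      simp [hS]
    have h2 : ∑ i ∈ Finset.univ.filter (fun i => ¬ (W1 i - W0 i = 1)),
        (W1 i - W0 i) = 0 := by
      apply Finset.sum_eq_zero
      intro i hi
      simp only [Finset.mem_filter] at hi
      rcases hdichot i with h | h
      · exact absurd h hi.2
      · rw [h]; ring
    rw [h1, h2, add_zero]
  obtain ⟨j, hj⟩ := hco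
  have hjS : j ∈ S := by
    simp only [hS, Finset.mem_filter, Finset.mem_univ, true_and]
    rcases hdichot j with h | h
    · exact h
    · exact absurd h (ne_of_gt hj)
  have hcard : (0 : ℝ) < (S.card : ℝ) := by
    exact_mod_cast Finset.card_pos.mpr ⟨j, hjS⟩
  have hnpos : (0 : ℝ) < (n : ℝ) := by exact_mod_cast hn
  rw [hY, hW]
  field_simp
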